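/- Proposition 1 (finite-state version). Let a finite constrained Markov decision process with discount factor γ ∈ [0,1), reward R, cost functions C_1,…,C_m and cost limits d_1,…,d_m be given. Suppose π_k is a stationary policy with J_{C_i}(π_k) ≤ d_i for all i, and suppose π_{k+1} maximizes, over all stationary policies π, the surrogate objective Σ_{s} d^π(s) · Σ_{a} π(a|s) · A_R^{π_k}(s,a) subject to the constraints J_{C_i}(π_k) + (1/(1−γ)) · Σ_{s} d^π(s) · Σ_{a} π(a|s) · A_{C_i}^{π_k}(s,a) ≤ d_i for all i = 1,…,m. Then π_{k+1} yields a monotonic return improvement and hard constraint satisfaction: J_R(π_{k+1}) ≥ J_R(π_k) and J_{C_i}(π_{k+1}) ≤ d_i for all i. -/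

import Mathlib

open Finset

/-- A finite Markov decision process. -/
structure MDP (S A : Type) [Fintype S] [Fintype A] where
  P : S → A → S → ℝ
  P_nonneg : ∀ s a s', 0 ≤ P s a s'
  P_sum : ∀ s a, ∑ s', P s a s' = 1
  μ : S → ℝ
  μ_nonneg : ∀ s, 0 ≤ μ s
  μ_sum : ∑ s, μ s = 1
  γ : ℝ
  γ_nonneg : 0 ≤ γ
  γ_lt_one : γ < 1

/-- A stationary policy: a probability distribution over actions for each state. -/
def IsPolicy {S A : Type} [Fintype S] [Fintype A] (π : S → A → ℝ) : Prop :=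
  (∀ s a, 0 ≤ π s a) ∧ (∀ s, ∑ a, π s a = 1)

/-- The time-`t` state distribution `μ_t^π`. -/
def stateDist {S A : Type} [Fintype S] [Fintype A] (M : MDP S A) (π : S → A → ℝ) :
    ℕ → S → ℝ
  | 0 => M.μ
  | (t + 1) => fun s' => ∑ s, ∑ a, stateDist M π t s * π s a * M.P s a s'

/-- The expected discounted return `J_f(π)`. -/
noncomputable def Jret {S A : Type} [Fintype S] [Fintype A] (M : MDP S A)
    (π : S → A → ℝ) (f : S → A → S → ℝ) : ℝ :=
  ∑' t : ℕ, M.γ ^ t * ∑ s, ∑ a, ∑ s', stateDist M π t s * π s a * M.P s a s' * f s a s'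

/-- The discounted future state distribution `d^π`. -/
noncomputable def dDist {S A : Type} [Fintype S] [Fintype A] (M : MDP S A)
    (π : S → A → ℝ) (s : S) : ℝ :=
  (1 - M.γ) * ∑' t : ℕ, M.γ ^ t * stateDist M π t s

/-- `V` satisfies the Bellman equation for `f` under policy `π`. -/
def IsValue {S A : Type} [Fintype S] [Fintype A] (M : MDP S A) (π : S → A → ℝ)
    (f : S → A → S → ℝ) (V : S → ℝ) : Prop :=
  ∀ s, V s = ∑ a, π s a * ∑ s', M.P s a s' * (f s a s' + M.γ * V s')

/-- The advantage function `A_f^π` built from a value function `V`. -/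
def adv {S A : Type} [Fintype S] [Fintype A] (M : MDP S A)
    (f : S → A → S → ℝ) (V : S → ℝ) (s : S) (a : A) : ℝ :=
  (∑ s', M.P s a s' * (f s a s' + M.γ * V s')) - V s
section Aux
variable {S A : Type} [Fintype S] [Fintype A] (M : MDP S A) (π : S → A → ℝ)

lemma stateDist_nonneg (hπ : IsPolicy π) : ∀ t s, 0 ≤ stateDist M π t s
  | 0, s => M.μ_nonneg s
  | (t+1), s' => Finset.sum_nonneg fun s _ => Finset.sum_nonneg fun a _ =>
      mul_nonneg (mul_nonneg (stateDist_nonneg hπ t s) (hπ.1 s a)) (M.P_nonneg s a s')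

lemma stateDist_sum (hπ : IsPolicy π) : ∀ t, ∑ s, stateDist M π t s = 1
  | 0 => M.μ_sum
  | (t+1) => by
    have : ∑ s', stateDist M π (t+1) s'
        = ∑ s, ∑ a, stateDist M π t s * π s a * ∑ s', M.P s a s' := by
      simp only [stateDist, Finset.mul_sum]
      rw [Finset.sum_comm]
      exact Finset.sum_congr rfl fun s _ => Finset.sum_comm
    rw [this]
    simp only [M.P_sum, mul_one]
    have : ∀ s, ∑ a, stateDist M π t s * π s a = stateDist M π t s := by
      intro s; rw [← Finset.mul_sum, hπ.2, mul_one]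
    simp only [this]
    exact stateDist_sum hπ t

lemma stateDist_le_one (hπ : IsPolicy π) (t : ℕ) (s : S) : stateDist M π t s ≤ 1 := by
  calc stateDist M π t s ≤ ∑ s', stateDist M π t s' :=
        Finset.single_le_sum (fun s' _ => stateDist_nonneg M π hπ t s') (Finset.mem_univ s)
    _ = 1 := stateDist_sum M π hπ t

lemma summable_state (hπ : IsPolicy π) (s : S) (c : ℝ) :
    Summable (fun t => M.γ ^ t * stateDist M π t s * c) := by
  apply Summable.of_norm_bounded (g := fun t => M.γ ^ t * |c|)
  · exact (summable_geometric_of_lt_one M.γ_nonneg M.γ_lt_one).mul_right _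
  · intro t
    rw [norm_mul, norm_mul, Real.norm_eq_abs, Real.norm_eq_abs, Real.norm_eq_abs,
      abs_of_nonneg (pow_nonneg M.γ_nonneg t),
      abs_of_nonneg (stateDist_nonneg M π hπ t s)]
    exact mul_le_mul_of_nonneg_right
      (mul_le_of_le_one_right (pow_nonneg M.γ_nonneg t) (stateDist_le_one M π hπ t s))
      (abs_nonneg c)

lemma summable_avg (hπ : IsPolicy π) (g : S → ℝ) :
    Summable (fun t => M.γ ^ t * ∑ s, stateDist M π t s * g s) := by
  have : (fun t => M.γ ^ t * ∑ s, stateDist M π t s * g s)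
      = fun t => ∑ s, M.γ ^ t * stateDist M π t s * g s := by
    funext t; rw [Finset.mul_sum]; exact Finset.sum_congr rfl fun s _ => by ring
  rw [this]
  exact summable_sum fun s _ => summable_state M π hπ s (g s)

end Aux

section Main
variable {S A : Type} [Fintype S] [Fintype A] (M : MDP S A)

lemma pol_adv_zero (πk : S → A → ℝ) (hπk : IsPolicy πk) (f : S → A → S → ℝ)
    (V : S → ℝ) (hV : IsValue M πk f V) (s : S) :
    ∑ a, πk s a * adv M f V s a = 0 := by
  simp only [adv, mul_sub]
  rw [Finset.sum_sub_distrib, ← Finset.sum_mul, hπk.2 s, one_mul, ← hV s, sub_self]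

lemma Jret_eq (π πk : S → A → ℝ) (hπ : IsPolicy π)
    (f : S → A → S → ℝ) (V : S → ℝ) :
    Jret M π f = (∑ s, M.μ s * V s)
      + (1 / (1 - M.γ)) * ∑ s, dDist M π s * ∑ a, π s a * adv M f V s a := by
  set δ : S → ℝ := fun s => ∑ a, π s a * adv M f V s a with hδdef
  have key : ∀ t, ∑ s, ∑ a, ∑ s', stateDist M π t s * π s a * M.P s a s' * f s a s'
      = (∑ s, stateDist M π t s * δ s) + (∑ s, stateDist M π t s * V s)
        - M.γ * ∑ s', stateDist M π (t+1) s' * V s' := by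
    intro t
    have hδs : ∀ s, stateDist M π t s * δ s
        = (∑ a, ∑ s', stateDist M π t s * π s a * M.P s a s' * f s a s')
          + M.γ * (∑ a, ∑ s', stateDist M π t s * π s a * M.P s a s' * V s')
          - stateDist M π t s * V s := by
      intro s
      have h2 : δ s
          = (∑ a, π s a * ∑ s', M.P s a s' * f s a s')
            + M.γ * (∑ a, π s a * ∑ s', M.P s a s' * V s') - V s := by
        have h3 : ∀ a, π s a * adv M f V s a
            = π s a * ∑ s', M.P s a s' * f s a s'
              + M.γ * (π s a * ∑ s', M.P s a s' * V s') - π s a * V s := by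
          intro a
          have h4 : ∑ s', M.P s a s' * (f s a s' + M.γ * V s')
              = (∑ s', M.P s a s' * f s a s') + M.γ * ∑ s', M.P s a s' * V s' := by
            rw [Finset.mul_sum, ← Finset.sum_add_distrib]
            exact Finset.sum_congr rfl fun s' _ => by ring
          simp only [adv, h4]; ring
        show (∑ a, π s a * adv M f V s a) = _
        rw [Finset.sum_congr rfl fun a _ => h3 a, Finset.sum_sub_distrib,
          Finset.sum_add_distrib, ← Finset.mul_sum, ← Finset.sum_mul, hπ.2 s, one_mul]
      have hf : ∑ a, ∑ s', stateDist M π t s * π s a * M.P s a s' * f s a s'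
          = stateDist M π t s * ∑ a, π s a * ∑ s', M.P s a s' * f s a s' := by
        rw [Finset.mul_sum]
        exact Finset.sum_congr rfl fun a _ => by
          rw [Finset.mul_sum, Finset.mul_sum]
          exact Finset.sum_congr rfl fun s' _ => by ring
      have hv : ∑ a, ∑ s', stateDist M π t s * π s a * M.P s a s' * V s'
          = stateDist M π t s * ∑ a, π s a * ∑ s', M.P s a s' * V s' := by
        rw [Finset.mul_sum]
        exact Finset.sum_congr rfl fun a _ => by
          rw [Finset.mul_sum, Finset.mul_sum]
          exact Finset.sum_congr rfl fun s' _ => by ring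
      rw [hf, hv, h2]; ring
    have hnext : ∑ s', stateDist M π (t+1) s' * V s'
        = ∑ s, ∑ a, ∑ s', stateDist M π t s * π s a * M.P s a s' * V s' := by
      calc ∑ s', stateDist M π (t+1) s' * V s'
          = ∑ s', ∑ s, ∑ a, stateDist M π t s * π s a * M.P s a s' * V s' := by
            refine Finset.sum_congr rfl fun s' _ => ?_
            show (∑ s, ∑ a, stateDist M π t s * π s a * M.P s a s') * V s' = _
            rw [Finset.sum_mul]
            exact Finset.sum_congr rfl fun s _ => by rw [Finset.sum_mul]
        _ = ∑ s, ∑ s', ∑ a, stateDist M π t s * π s a * M.P s a s' * V s' :=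
            Finset.sum_comm
        _ = ∑ s, ∑ a, ∑ s', stateDist M π t s * π s a * M.P s a s' * V s' :=
            Finset.sum_congr rfl fun s _ => Finset.sum_comm
    calc ∑ s, ∑ a, ∑ s', stateDist M π t s * π s a * M.P s a s' * f s a s'
        = ∑ s, (stateDist M π t s * δ s + stateDist M π t s * V s
            - M.γ * ∑ a, ∑ s', stateDist M π t s * π s a * M.P s a s' * V s') := by
          refine Finset.sum_congr rfl fun s _ => ?_
          rw [hδs s]; ring
      _ = (∑ s, stateDist M π t s * δ s) + (∑ s, stateDist M π t s * V s)
            - M.γ * ∑ s, ∑ a, ∑ s', stateDist M π t s * π s a * M.P s a s' * V s' := by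
          rw [Finset.sum_sub_distrib, Finset.sum_add_distrib, Finset.mul_sum]
      _ = _ := by rw [hnext]
  set av : ℕ → ℝ := fun t => M.γ ^ t * ∑ s, stateDist M π t s * V s with hav
  set bv : ℕ → ℝ := fun t => M.γ ^ t * ∑ s, stateDist M π t s * δ s with hbv
  have Sa : Summable av := summable_avg M π hπ V
  have Sb : Summable bv := summable_avg M π hπ δ
  have Sa' : Summable (fun t => av (t + 1)) := (summable_nat_add_iff 1).2 Sa
  have hterm : ∀ t, M.γ ^ t * ∑ s, ∑ a, ∑ s', stateDist M π t s * π s a * M.P s a s' * f s a s'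
      = bv t + av t - av (t + 1) := by
    intro t
    rw [key t, hav, hbv]
    simp only []
    ring
  have hJ : Jret M π f = (∑' t, bv t) + (∑' t, av t) - ∑' t, av (t + 1) := by
    rw [Jret]
    rw [tsum_congr hterm]
    rw [Summable.tsum_sub (Sb.add Sa) Sa', Summable.tsum_add Sb Sa]
  rw [hJ, Summable.tsum_eq_zero_add Sa]
  have hb : (∑' t, bv t) = (1 / (1 - M.γ)) * ∑ s, dDist M π s * δ s := by
    have hbs : ∀ t, bv t = ∑ s, M.γ ^ t * stateDist M π t s * δ s := by
      intro t; rw [hbv]; simp only []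
      rw [Finset.mul_sum]
      exact Finset.sum_congr rfl fun s _ => by ring
    rw [tsum_congr hbs, Summable.tsum_finsetSum fun s _ => summable_state M π hπ s (δ s)]
    have hγ : (1 : ℝ) - M.γ ≠ 0 := by
      have := M.γ_lt_one; intro h; linarith
    rw [Finset.mul_sum]
    refine Finset.sum_congr rfl fun s _ => ?_
    rw [tsum_mul_right, dDist]
    field_simp
  have ha0 : av 0 = ∑ s, M.μ s * V s := by
    rw [hav]; simp [stateDist]
  rw [hb, ha0]; ring

lemma perf_diff (π πk : S → A → ℝ) (hπ : IsPolicy π) (hπk : IsPolicy πk)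
    (f : S → A → S → ℝ) (V : S → ℝ) (hV : IsValue M πk f V) :
    Jret M π f = Jret M πk f
      + (1 / (1 - M.γ)) * ∑ s, dDist M π s * ∑ a, π s a * adv M f V s a := by
  rw [Jret_eq M π πk hπ f V, Jret_eq M πk πk hπk f V]
  simp [pol_adv_zero M πk hπk f V hV]

end Main

/-- Proposition 1 (finite-state version): the constrained policy iteration step
yields monotonic return improvement and hard constraint satisfaction. -/
theorem constrained_policy_iteration_monotone {S A : Type} [Fintype S] [Fintype A]
    [Nonempty S] [Nonempty A] (M : MDP S A) (m : ℕ)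
    (R : S → A → S → ℝ) (C : Fin m → S → A → S → ℝ) (d : Fin m → ℝ)
    (πk πk1 : S → A → ℝ) (hπk : IsPolicy πk) (hπk1 : IsPolicy πk1)
    (VR : S → ℝ) (hVR : IsValue M πk R VR)
    (VC : Fin m → S → ℝ) (hVC : ∀ i, IsValue M πk (C i) (VC i))
    -- the current policy `π_k` is feasible
    (hfeas : ∀ i, Jret M πk (C i) ≤ d i)
    -- `π_{k+1}` satisfies the surrogate constraints
    (hcons : ∀ i, Jret M πk (C i) +
      (1 / (1 - M.γ)) * ∑ s, dDist M πk1 s * ∑ a, πk1 s a * adv M (C i) (VC i) s a ≤ d i)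
    -- `π_{k+1}` maximizes the surrogate objective among all policies satisfying them
    (hmax : ∀ π : S → A → ℝ, IsPolicy π →
      (∀ i, Jret M πk (C i) +
        (1 / (1 - M.γ)) * ∑ s, dDist M π s * ∑ a, π s a * adv M (C i) (VC i) s a ≤ d i) →
      (∑ s, dDist M π s * ∑ a, π s a * adv M R VR s a) ≤
        ∑ s, dDist M πk1 s * ∑ a, πk1 s a * adv M R VR s a) :
    Jret M πk R ≤ Jret M πk1 R ∧ ∀ i, Jret M πk1 (C i) ≤ d i := by
  have hγpos : (0:ℝ) < 1 - M.γ := by linarith [M.γ_lt_one]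
  have hzeroR : ∀ s, ∑ a, πk s a * adv M R VR s a = 0 := pol_adv_zero M πk hπk R VR hVR
  have hzeroC : ∀ i s, ∑ a, πk s a * adv M (C i) (VC i) s a = 0 :=
    fun i => pol_adv_zero M πk hπk (C i) (VC i) (hVC i)
  constructor
  · have hsurrK : ∀ i, Jret M πk (C i) +
        (1 / (1 - M.γ)) * ∑ s, dDist M πk s * ∑ a, πk s a * adv M (C i) (VC i) s a ≤ d i := by
      intro i
      simp only [hzeroC i, mul_zero, Finset.sum_const_zero, add_zero]
      exact hfeas i
    have h := hmax πk hπk hsurrK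
    have h0 : (∑ s, dDist M πk s * ∑ a, πk s a * adv M R VR s a) = 0 := by
      simp [hzeroR]
    rw [h0] at h
    rw [perf_diff M πk1 πk hπk1 hπk R VR hVR]
    have hnn : 0 ≤ (1 / (1 - M.γ)) * ∑ s, dDist M πk1 s * ∑ a, πk1 s a * adv M R VR s a :=
      mul_nonneg (by positivity) h
    linarith
  · intro i
    rw [perf_diff M πk1 πk hπk1 hπk (C i) (VC i) (hVC i)]
    exact hcons i
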